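/- Let p ∈ (1,∞) \ {2} and let a, b > 0. Then (a - b)² ≤ ((p² - 4p + 4)/(2p² - 4p + 4)) · (a² + b² + a^{2/(2-p)}·b^{(2p-2)/(p-2)} + b^{2/(2-p)}·a^{(2p-2)/(p-2)}). -/

import Mathlib

lemma aux_sinh (m : ℝ) (hm : 1 ≤ m) (y : ℝ) (hy : 0 ≤ y) :
    m * Real.sinh y ≤ Real.sinh (m * y) := by
  have h : ∀ z ∈ Set.Ici (0:ℝ), 0 ≤ deriv (fun t => Real.sinh (m * t) - m * Real.sinh t) z := by
    intro z hz
    have hd : deriv (fun t => Real.sinh (m * t) - m * Real.sinh t) z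
        = m * Real.cosh (m * z) - m * Real.cosh z := by
      have h1 : HasDerivAt (fun t : ℝ => Real.sinh (m * t) - m * Real.sinh t)
          (Real.cosh (m * z) * m - m * Real.cosh z) z := by
        have := ((Real.hasDerivAt_sinh (m * z)).comp z ((hasDerivAt_id z).const_mul m))
        have h2 := this.sub ((Real.hasDerivAt_sinh z).const_mul m)
        simp only [mul_one] at h2
        exact h2
      rw [h1.deriv]; ring
    rw [hd]
    have : Real.cosh z ≤ Real.cosh (m * z) := by
      rw [Real.cosh_le_cosh]
      rw [abs_mul]
      nlinarith [abs_nonneg z, le_abs_self m, abs_nonneg m, le_trans hm (le_abs_self m)]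
    nlinarith
  have hmono : MonotoneOn (fun t => Real.sinh (m * t) - m * Real.sinh t) (Set.Ici 0) := by
    apply monotoneOn_of_deriv_nonneg (convex_Ici 0)
    · exact ((Real.continuous_sinh.comp (continuous_const.mul continuous_id)).sub
        (continuous_const.mul Real.continuous_sinh)).continuousOn
    · intro z hz
      exact (((Real.differentiable_sinh.comp ((differentiable_id).const_mul m)) z).sub
        ((Real.differentiable_sinh z).const_mul m)).differentiableWithinAt
    · intro z hz
      exact h z (interior_subset hz)
  have := hmono (Set.self_mem_Ici) hy hy
  simp at this
  linarith

lemma aux_cosh (m x : ℝ) (hm : 1 ≤ |m|) :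
    m ^ 2 * (Real.cosh x - 1) ≤ Real.cosh (m * x) - 1 := by
  have hid : ∀ z : ℝ, Real.cosh z - 1 = 2 * Real.sinh (z / 2) ^ 2 := by
    intro z
    have h1 : Real.cosh (2 * (z / 2)) = Real.cosh (z/2) ^ 2 + Real.sinh (z/2) ^ 2 :=
      Real.cosh_two_mul _
    have h2 : Real.cosh (z/2) ^ 2 = Real.sinh (z/2) ^ 2 + 1 := Real.cosh_sq _
    have : (2:ℝ) * (z/2) = z := by ring
    rw [this] at h1
    linarith
  rw [hid, hid]
  have key : |m| * Real.sinh (|x| / 2) ≤ Real.sinh (|m| * (|x| / 2)) :=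
    aux_sinh |m| hm (|x|/2) (by positivity)
  have hs1 : Real.sinh (m * x / 2) ^ 2 = Real.sinh (|m| * (|x| / 2)) ^ 2 := by
    have : |m| * (|x| / 2) = |m * x / 2| := by
      rw [abs_div, abs_mul]; simp [abs_of_nonneg]; ring
    rw [this]
    rcases abs_cases (m * x / 2) with ⟨h, _⟩ | ⟨h, _⟩ <;> rw [h] <;> simp [Real.sinh_neg]
  have hs2 : Real.sinh (x / 2) ^ 2 = Real.sinh (|x| / 2) ^ 2 := by
    rcases abs_cases x with ⟨h, _⟩ | ⟨h, _⟩ <;> rw [h] <;>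
      simp [neg_div, Real.sinh_neg]
  rw [hs1, hs2]
  have h0 : 0 ≤ Real.sinh (|x| / 2) := by
    rw [← Real.sinh_zero]
    exact (Real.sinh_le_sinh.mpr (by positivity))
  have hsq : (|m| * Real.sinh (|x| / 2)) ^ 2 ≤ Real.sinh (|m| * (|x| / 2)) ^ 2 := by
    apply pow_le_pow_left₀ (by positivity) key
  have : m ^ 2 = |m| ^ 2 := (sq_abs m).symm
  nlinarith [sq_abs m]

theorem stmt_5 (p : ℝ) (hp1 : 1 < p) (hp2 : p ≠ 2) (a b : ℝ) (ha : 0 < a) (hb : 0 < b) :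
    (a - b) ^ (2 : ℕ) ≤
      ((p ^ 2 - 4 * p + 4) / (2 * p ^ 2 - 4 * p + 4)) *
        (a ^ (2 : ℕ) + b ^ (2 : ℕ) + a ^ (2 / (2 - p)) * b ^ ((2 * p - 2) / (p - 2)) +
          b ^ (2 / (2 - p)) * a ^ ((2 * p - 2) / (p - 2))) := by
  have h2p : (2 : ℝ) - p ≠ 0 := fun h => hp2 (by linarith)
  have hp2' : p - 2 ≠ 0 := fun h => hp2 (by linarith)
  set m : ℝ := p / (2 - p) with hmdef
  have hm : 1 ≤ |m| := by
    rw [hmdef, abs_div, le_div_iff₀ (abs_pos.2 h2p)]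
    rcases abs_cases p with ⟨h1, h2⟩ | ⟨h1, h2⟩ <;> rcases abs_cases (2 - p) with ⟨h3, h4⟩ | ⟨h3, h4⟩ <;>
      linarith
  have key := aux_cosh m (Real.log a - Real.log b) hm
  rw [Real.cosh_eq, Real.cosh_eq] at key
  set K1 := Real.exp (m * (Real.log a - Real.log b)) with hK1
  set K2 := Real.exp (-(m * (Real.log a - Real.log b))) with hK2
  have hab : (0:ℝ) < a * b := mul_pos ha hb
  have e1 : Real.exp (Real.log a - Real.log b) = a / b := by
    rw [Real.exp_sub, Real.exp_log ha, Real.exp_log hb]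
  have e2 : Real.exp (-(Real.log a - Real.log b)) = b / a := by
    rw [neg_sub, Real.exp_sub, Real.exp_log ha, Real.exp_log hb]
  rw [e1, e2] at key
  have habK1 : a * b * K1 = Real.exp (Real.log a + Real.log b + m * (Real.log a - Real.log b)) := by
    rw [Real.exp_add, Real.exp_add, Real.exp_log ha, Real.exp_log hb, hK1]
  have habK2 : a * b * K2 = Real.exp (Real.log a + Real.log b + -(m * (Real.log a - Real.log b))) := by
    rw [Real.exp_add, Real.exp_add, Real.exp_log ha, Real.exp_log hb, hK2]
  have hC1 : a ^ (2 / (2 - p)) * b ^ ((2 * p - 2) / (p - 2)) = a * b * K1 := by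
    rw [Real.rpow_def_of_pos ha, Real.rpow_def_of_pos hb, habK1, ← Real.exp_add, Real.exp_eq_exp]
    rw [hmdef]
    field_simp
    ring
  have hC2 : b ^ (2 / (2 - p)) * a ^ ((2 * p - 2) / (p - 2)) = a * b * K2 := by
    rw [Real.rpow_def_of_pos ha, Real.rpow_def_of_pos hb, habK2, ← Real.exp_add, Real.exp_eq_exp]
    rw [hmdef]
    field_simp
    ring
  have key2 : m ^ 2 * (a - b) ^ 2 ≤ a * b * K1 + a * b * K2 - 2 * (a * b) := by
    have h := mul_le_mul_of_nonneg_left key (by positivity : (0:ℝ) ≤ 2 * (a * b))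
    have l1 : 2 * (a * b) * (m ^ 2 * ((a / b + b / a) / 2 - 1)) = m ^ 2 * (a - b) ^ 2 := by
      field_simp; ring
    have l2 : 2 * (a * b) * ((K1 + K2) / 2 - 1) = a * b * K1 + a * b * K2 - 2 * (a * b) := by
      ring
    rw [l1, l2] at h
    exact h
  rw [hC1, hC2]
  have hD : (0:ℝ) < 2 * p ^ 2 - 4 * p + 4 := by nlinarith [sq_nonneg (p - 2), sq_nonneg p]
  have hN : (0:ℝ) < p ^ 2 - 4 * p + 4 := by
    have : 0 < (p - 2) ^ 2 := by positivity
    nlinarith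
  have hκpos : 0 < (p ^ 2 - 4 * p + 4) / (2 * p ^ 2 - 4 * p + 4) := div_pos hN hD
  have hκ : ((p ^ 2 - 4 * p + 4) / (2 * p ^ 2 - 4 * p + 4)) * (1 + m ^ 2) = 1 := by
    rw [hmdef, div_pow, div_mul_eq_mul_div, div_eq_one_iff_eq hD.ne']
    field_simp
    ring
  nlinarith [mul_le_mul_of_nonneg_left key2 hκpos.le, hab, mul_pos hκpos hab,
    mul_le_mul_of_nonneg_right hκ.le (sq_nonneg (a - b)),
    mul_le_mul_of_nonneg_right hκ.ge (sq_nonneg (a - b))]
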